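/- For every integer a, the matrix [[a,−1],[−1,0]] equals A·B⁻¹·A²·B⁻¹·A·C·B⁻¹·A·B^(−a−1). -/

import Mathlib

open Matrix

def A : (Matrix (Fin 2) (Fin 2) ℤ)ˣ :=
  ⟨!![1,1;0,1], !![1,-1;0,1], by decide, by decide⟩

def B : (Matrix (Fin 2) (Fin 2) ℤ)ˣ :=
  ⟨!![1,0;1,1], !![1,0;-1,1], by decide, by decide⟩

def C : (Matrix (Fin 2) (Fin 2) ℤ)ˣ :=
  ⟨!![1,0;0,-1], !![1,0;0,-1], by decide, by decide⟩

lemma Bzpow (z : ℤ) :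
    ((B ^ z : (Matrix (Fin 2) (Fin 2) ℤ)ˣ) : Matrix (Fin 2) (Fin 2) ℤ) = !![1,0;z,1] := by
  induction z using Int.induction_on with
  | zero =>
    simp only [zpow_zero, Units.val_one]
    ext i j; fin_cases i <;> fin_cases j <;> simp [Matrix.one_apply]
  | succ n ih =>
    rw [_root_.zpow_add_one, Units.val_mul, ih]
    ext i j; fin_cases i <;> fin_cases j <;>
      simp [B, Matrix.mul_apply, Fin.sum_univ_two]
  | pred n ih =>
    rw [_root_.zpow_sub_one, Units.val_mul, ih]
    ext i j; fin_cases i <;> fin_cases j <;>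
      simp [B, Matrix.mul_apply, Fin.sum_univ_two] <;> ring

theorem case_bc_negone_negone (a : ℤ) :
    !![a, -1; -1, 0] =
    ((A * B⁻¹ * A ^ 2 * B⁻¹ * A * C * B⁻¹ * A * B ^ (-a - 1) :
        (Matrix (Fin 2) (Fin 2) ℤ)ˣ) : Matrix (Fin 2) (Fin 2) ℤ) := by
  have hB := Bzpow (-a - 1)
  simp only [Units.val_mul, Units.val_pow_eq_pow_val, hB]
  ext i j; fin_cases i <;> fin_cases j <;>
    simp [A, B, C, Matrix.mul_apply, Fin.sum_univ_two, pow_two] <;> ring
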